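/- arXiv:1505.06075 — 3 statements merged into one kernel-verified Lean document; each statement's English description precedes it below -/
import Mathlib

section
/- Third derivative of the Ornstein–Uhlenbeck semigroup via Gaussian integration by parts: let γ denote the standard Gaussian measure on ℝ and for t ≥ 0 define P_tF(x) = ∫ F(e^{-t}x + √(1−e^{-2t}) y) dγ(y). If F : ℝ → ℝ is twice continuously differentiable with F, F′, F″ bounded, then for every t > 0 the function P_tF is three times differentiable and (P_tF)‴(x) = (e^{-3t}/√(1−e^{-2t})) ∫ F″(e^{-t}x + √(1−e^{-2t}) y) · y dγ(y) for all x ∈ ℝ. -/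
open MeasureTheory Real ProbabilityTheory

/-- The Ornstein–Uhlenbeck (Mehler) semigroup:
`P_t F (x) = ∫ F(e^{-t} x + √(1 − e^{-2t}) y) dγ(y)`. -/
noncomputable def ouSemigroup (t : ℝ) (F : ℝ → ℝ) (x : ℝ) : ℝ :=
  ∫ y, F (Real.exp (-t) * x + Real.sqrt (1 - Real.exp (-2 * t)) * y) ∂(gaussianReal 0 1)

open Metric



noncomputable def gpdf (x : ℝ) : ℝ := (Real.sqrt (2 * Real.pi))⁻¹ * Real.exp (-(x ^ 2) / 2)

lemma gpdf_eq : gaussianPDFReal 0 1 = gpdf := by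
  funext x
  simp [gaussianPDFReal, gpdf]

lemma gpdf_nonneg (x : ℝ) : 0 ≤ gpdf x := by
  unfold gpdf; positivity

lemma continuous_gpdf : Continuous gpdf := by
  unfold gpdf; fun_prop

lemma hasDerivAt_gpdf (x : ℝ) : HasDerivAt gpdf (-x * gpdf x) x := by
  unfold gpdf
  have h : HasDerivAt (fun x : ℝ => -(x ^ 2) / 2) (-x) x := by
    have := ((hasDerivAt_pow 2 x).neg).div_const 2
    simpa using this.congr_deriv (by ring)
  have := (h.exp).const_mul (Real.sqrt (2 * Real.pi))⁻¹
  exact this.congr_deriv (by ring)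

lemma gauss_integral_eq (g : ℝ → ℝ) :
    ∫ y, g y ∂(gaussianReal 0 1) = ∫ y, gpdf y * g y := by
  rw [gaussianReal_of_var_ne_zero _ one_ne_zero]
  have : gaussianPDF 0 1 = fun x => (Real.toNNReal (gpdf x) : ENNReal) := by
    funext x; rw [gaussianPDF, gpdf_eq]; rfl
  rw [this, integral_withDensity_eq_integral_smul
    (continuous_gpdf.measurable.real_toNNReal) g]
  congr 1; funext x
  rw [NNReal.smul_def, Real.coe_toNNReal _ (gpdf_nonneg x), smul_eq_mul]

lemma abs_mul_exp_le (w : ℝ) : |w| * Real.exp (-(w ^ 2) / 4) ≤ 4 := by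
  rcases le_or_gt (|w|) 4 with h | h
  · calc |w| * Real.exp (-(w ^ 2) / 4) ≤ 4 * 1 := by
          apply mul_le_mul h (Real.exp_le_one_iff.2 (by nlinarith [sq_nonneg w]))
            (Real.exp_nonneg _) (by norm_num)
        _ = 4 := by norm_num
  · have h1 : |w| ≤ Real.exp (w ^ 2 / 4) := by
      have h2 : |w| ≤ 1 + w ^ 2 / 4 := by nlinarith [abs_nonneg w, sq_abs w]
      exact h2.trans (by linarith [Real.add_one_le_exp (w ^ 2 / 4)])
    calc |w| * Real.exp (-(w ^ 2) / 4) ≤ Real.exp (w ^ 2 / 4) * Real.exp (-(w ^ 2) / 4) := by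
          apply mul_le_mul_of_nonneg_right h1 (Real.exp_nonneg _)
        _ = 1 := by rw [← Real.exp_add]; ring_nf; exact Real.exp_zero
        _ ≤ 4 := by norm_num

lemma integral_comp_affine (g : ℝ → ℝ) (c s : ℝ) (hs : 0 < s) :
    ∫ u, g ((u - c) / s) = s * ∫ y, g y := by
  have h1 : (∫ u, g ((u - c) / s)) = ∫ u, (fun v => g (v / s)) (u + -c) := by
    simp only [sub_eq_add_neg]
  rw [h1, integral_add_right_eq_self (fun v => g (v / s)) (-c)]
  have h2 : (∫ v, g (v / s)) = ∫ v, g (s⁻¹ * v) := by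
    congr 1; funext v; rw [div_eq_inv_mul]
  rw [h2, MeasureTheory.Measure.integral_comp_mul_left g s⁻¹, inv_inv, abs_of_pos hs, smul_eq_mul]

/-- Differentiation under the integral sign for the Mehler form. -/
lemma hasDerivAt_mehler (G : ℝ → ℝ) (hG : ContDiff ℝ 1 G)
    (D : ℝ) (hGb : ∀ x, |G x| ≤ D) (C : ℝ) (hG'b : ∀ x, |deriv G x| ≤ C)
    (a s : ℝ) (x : ℝ) :
    HasDerivAt (fun x => ∫ y, G (a * x + s * y) ∂(gaussianReal 0 1))
      (a * ∫ y, deriv G (a * x + s * y) ∂(gaussianReal 0 1)) x := by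
  have hGc : Continuous G := hG.continuous
  have hG'c : Continuous (deriv G) := hG.continuous_deriv le_rfl
  have hmain := hasDerivAt_integral_of_dominated_loc_of_deriv_le
    (μ := gaussianReal 0 1) (x₀ := x)
    (F := fun x y => G (a * x + s * y)) (F' := fun x y => a * deriv G (a * x + s * y))
    (bound := fun _ => |a| * C) (ball_mem_nhds x one_pos)
    (Filter.Eventually.of_forall fun x =>
      ((hGc.comp (by fun_prop)).aestronglyMeasurable))
    (((integrable_const D).mono'
      ((hGc.comp (by fun_prop : Continuous fun y : ℝ => a * x + s * y)).aestronglyMeasurable)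
      (Filter.Eventually.of_forall fun y => by
        simpa [Real.norm_eq_abs] using hGb (a * x + s * y))))
    ((continuous_const.mul (hG'c.comp (by fun_prop))).aestronglyMeasurable)
    (Filter.Eventually.of_forall fun y x' _ => by
      rw [Real.norm_eq_abs, abs_mul]
      exact mul_le_mul_of_nonneg_left (hG'b _) (abs_nonneg a))
    (integrable_const _)
    (Filter.Eventually.of_forall fun y x' _ => by
      have h1 : HasDerivAt (fun x : ℝ => a * x + s * y) a x' := by
        simpa using ((hasDerivAt_id x').const_mul a).add_const (s * y)
      have h2 : HasDerivAt G (deriv G (a * x' + s * y)) (a * x' + s * y) :=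
        (hG.differentiable one_ne_zero _).hasDerivAt
      exact (h2.comp x' h1).congr_deriv (by ring))
  have h := hmain.2
  simp only [integral_const_mul] at h
  exact h

lemma sq_lower (p q : ℝ) : p ^ 2 / 2 - q ^ 2 ≤ (p - q) ^ 2 := by
  nlinarith [sq_nonneg (p - 2 * q)]

lemma hasDerivAt_keystep (F2 : ℝ → ℝ) (hc : Continuous F2) (C : ℝ) (hb : ∀ x, |F2 x| ≤ C)
    (a s : ℝ) (ha : 0 < a) (hs : 0 < s) (x₀ : ℝ) :
    HasDerivAt (fun x => ∫ y, F2 (a * x + s * y) ∂(gaussianReal 0 1))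
      ((a / s) * ∫ y, F2 (a * x₀ + s * y) * y ∂(gaussianReal 0 1)) x₀ := by
  have hC : 0 ≤ C := (abs_nonneg _).trans (hb 0)
  set M : ℝ := (a * (|x₀| + 1)) ^ 2 / (4 * s ^ 2) with hM
  -- uniform gaussian kernel bound on the ball
  have key : ∀ x' ∈ closedBall x₀ 1, ∀ u : ℝ,
      Real.exp (-(((u - a * x') / s) ^ 2) / 4)
        ≤ Real.exp M * Real.exp (-(u ^ 2) / (8 * s ^ 2)) := by
    intro x' hx' u
    rw [← Real.exp_add]
    apply Real.exp_le_exp.2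
    have hx'' : |x'| ≤ |x₀| + 1 := by
      have := mem_closedBall_iff_norm.mp hx'
      rw [Real.norm_eq_abs] at this
      calc |x'| = |x₀ + (x' - x₀)| := by ring_nf
        _ ≤ |x₀| + |x' - x₀| := abs_add_le _ _
        _ ≤ |x₀| + 1 := by linarith
    have h1 : u ^ 2 / 2 - (a * x') ^ 2 ≤ (u - a * x') ^ 2 := sq_lower u (a * x')
    have h2 : (a * x') ^ 2 ≤ (a * (|x₀| + 1)) ^ 2 := by
      have h3 : |a * x'| ≤ a * (|x₀| + 1) := by
        rw [abs_mul, abs_of_pos ha]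
        exact mul_le_mul_of_nonneg_left hx'' ha.le
      calc (a * x') ^ 2 = |a * x'| ^ 2 := (sq_abs _).symm
        _ ≤ (a * (|x₀| + 1)) ^ 2 := by
            apply pow_le_pow_left₀ (abs_nonneg _) h3
    have hgoal : -(((u - a * x') / s) ^ 2) / 4
        ≤ ((a * (|x₀| + 1)) ^ 2 - u ^ 2 / 2) / (4 * s ^ 2) := by
      rw [div_pow, show -((u - a * x') ^ 2 / s ^ 2) / 4
        = -((u - a * x') ^ 2) / (4 * s ^ 2) from by ring]
      gcongr
      linarith
    calc -(((u - a * x') / s) ^ 2) / 4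
        ≤ ((a * (|x₀| + 1)) ^ 2 - u ^ 2 / 2) / (4 * s ^ 2) := hgoal
      _ = M + -(u ^ 2) / (8 * s ^ 2) := by rw [hM]; field_simp; ring
  -- rewrite the function via the kernel representation
  have rep : (fun x => ∫ y, F2 (a * x + s * y) ∂(gaussianReal 0 1))
      = fun x => s⁻¹ * ∫ u, gpdf ((u - a * x) / s) * F2 u := by
    funext x
    rw [gauss_integral_eq (fun y => F2 (a * x + s * y))]
    have := integral_comp_affine (fun y => gpdf y * F2 (a * x + s * y)) (a * x) s hs
    have heq : (∫ u, (fun y => gpdf y * F2 (a * x + s * y)) ((u - a * x) / s))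
        = ∫ u, gpdf ((u - a * x) / s) * F2 u := by
      congr 1; funext u
      show gpdf ((u - a * x) / s) * F2 (a * x + s * ((u - a * x) / s))
        = gpdf ((u - a * x) / s) * F2 u
      have : a * x + s * ((u - a * x) / s) = u := by field_simp; ring
      rw [this]
    rw [heq] at this
    have this2 : (∫ u, gpdf ((u - a * x) / s) * F2 u)
        = s * ∫ y, gpdf y * F2 (a * x + s * y) := this
    rw [this2, ← mul_assoc, inv_mul_cancel₀ hs.ne', one_mul]
  rw [rep]
  -- derivative of the kernel integral
  have hTd : HasDerivAt (fun x => ∫ u, gpdf ((u - a * x) / s) * F2 u)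
      (∫ u, (a / s) * (((u - a * x₀) / s) * gpdf ((u - a * x₀) / s)) * F2 u) x₀ := by
    have hcont : ∀ x : ℝ, Continuous fun u => gpdf ((u - a * x) / s) * F2 u := fun x =>
      (continuous_gpdf.comp (by fun_prop)).mul hc
    have hcont' : Continuous fun u =>
        (a / s) * (((u - a * x₀) / s) * gpdf ((u - a * x₀) / s)) * F2 u := by
      exact (continuous_const.mul ((by fun_prop : Continuous fun u : ℝ => (u - a * x₀) / s).mul
        (continuous_gpdf.comp (by fun_prop)))).mul hc
    have hint : Integrable (fun u => Real.exp (-(1 / (8 * s ^ 2)) * u ^ 2)) := by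
      exact integrable_exp_neg_mul_sq (by positivity)
    have hbd : Integrable (fun u : ℝ =>
        C * (a / s) * 4 * (Real.sqrt (2 * Real.pi))⁻¹ * Real.exp M
          * Real.exp (-(u ^ 2) / (8 * s ^ 2))) := by
      have : (fun u : ℝ => C * (a / s) * 4 * (Real.sqrt (2 * Real.pi))⁻¹ * Real.exp M
          * Real.exp (-(u ^ 2) / (8 * s ^ 2)))
          = fun u : ℝ => C * (a / s) * 4 * (Real.sqrt (2 * Real.pi))⁻¹ * Real.exp M
          * Real.exp (-(1 / (8 * s ^ 2)) * u ^ 2) := by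
        funext u; congr 1; congr 1; ring
      rw [this]
      exact hint.const_mul _
    have hmain := hasDerivAt_integral_of_dominated_loc_of_deriv_le
      (μ := (volume : Measure ℝ)) (x₀ := x₀)
      (F := fun x u => gpdf ((u - a * x) / s) * F2 u)
      (F' := fun x u => (a / s) * (((u - a * x) / s) * gpdf ((u - a * x) / s)) * F2 u)
      (bound := fun u => C * (a / s) * 4 * (Real.sqrt (2 * Real.pi))⁻¹ * Real.exp M
          * Real.exp (-(u ^ 2) / (8 * s ^ 2)))
      (ball_mem_nhds x₀ one_pos)
      (Filter.Eventually.of_forall fun x => (hcont x).aestronglyMeasurable)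
      (by -- integrability at x₀
        apply (hbd.const_mul ((4:ℝ)⁻¹ * (a/s)⁻¹)).mono' (hcont x₀).aestronglyMeasurable
        refine Filter.Eventually.of_forall fun u => ?_
        rw [Real.norm_eq_abs, abs_mul]
        have hz := key x₀ (mem_closedBall_self zero_le_one) u
        have hgp : gpdf ((u - a * x₀) / s)
            ≤ (Real.sqrt (2 * Real.pi))⁻¹ * (Real.exp M * Real.exp (-(u ^ 2) / (8 * s ^ 2))) := by
          unfold gpdf
          apply mul_le_mul_of_nonneg_left _ (by positivity)
          refine le_trans ?_ hz
          apply Real.exp_le_exp.2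
          have := sq_nonneg ((u - a * x₀) / s)
          linarith
        have h5 : |gpdf ((u - a * x₀) / s)| = gpdf ((u - a * x₀) / s) :=
          abs_of_nonneg (gpdf_nonneg _)
        rw [h5]
        calc gpdf ((u - a * x₀) / s) * |F2 u|
            ≤ ((Real.sqrt (2 * Real.pi))⁻¹ * (Real.exp M * Real.exp (-(u ^ 2) / (8 * s ^ 2)))) * C := by
              apply mul_le_mul hgp (hb u) (abs_nonneg _) (by positivity)
          _ = (4:ℝ)⁻¹ * (a/s)⁻¹ * (C * (a / s) * 4 * (Real.sqrt (2 * Real.pi))⁻¹ * Real.exp M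
              * Real.exp (-(u ^ 2) / (8 * s ^ 2))) := by
              field_simp)
      hcont'.aestronglyMeasurable
      (Filter.Eventually.of_forall fun u x' hx' => by
        -- bound on the derivative
        set z := (u - a * x') / s with hz
        rw [Real.norm_eq_abs, abs_mul, abs_mul]
        have h1 : |a / s| = a / s := abs_of_pos (by positivity)
        have h2 : |z * gpdf z| = |z| * gpdf z := by
          rw [abs_mul, abs_of_nonneg (gpdf_nonneg _)]
        rw [h1, h2]
        have h3 : |z| * gpdf z ≤ 4 * (Real.sqrt (2 * Real.pi))⁻¹
            * (Real.exp M * Real.exp (-(u ^ 2) / (8 * s ^ 2))) := by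
          unfold gpdf
          have h4 : |z| * Real.exp (-(z ^ 2) / 2)
              = (|z| * Real.exp (-(z ^ 2) / 4)) * Real.exp (-(z ^ 2) / 4) := by
            rw [mul_assoc, ← Real.exp_add]; ring_nf
          have h6 : |z| * Real.exp (-(z ^ 2) / 2) ≤ 4 * Real.exp (-(z ^ 2) / 4) := by
            rw [h4]
            apply mul_le_mul_of_nonneg_right (abs_mul_exp_le z) (Real.exp_nonneg _)
          have h7 := key x' (ball_subset_closedBall hx') u
          calc |z| * ((Real.sqrt (2 * Real.pi))⁻¹ * Real.exp (-(z ^ 2) / 2))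
              = (Real.sqrt (2 * Real.pi))⁻¹ * (|z| * Real.exp (-(z ^ 2) / 2)) := by ring
            _ ≤ (Real.sqrt (2 * Real.pi))⁻¹ * (4 * Real.exp (-(z ^ 2) / 4)) := by
                apply mul_le_mul_of_nonneg_left h6 (by positivity)
            _ ≤ (Real.sqrt (2 * Real.pi))⁻¹ * (4 * (Real.exp M * Real.exp (-(u ^ 2) / (8 * s ^ 2)))) := by
                apply mul_le_mul_of_nonneg_left _ (by positivity)
                apply mul_le_mul_of_nonneg_left _ (by norm_num)
                exact h7
            _ = 4 * (Real.sqrt (2 * Real.pi))⁻¹ * (Real.exp M * Real.exp (-(u ^ 2) / (8 * s ^ 2))) := by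
                ring
        calc a / s * (|z| * gpdf z) * |F2 u|
            ≤ a / s * (4 * (Real.sqrt (2 * Real.pi))⁻¹
                * (Real.exp M * Real.exp (-(u ^ 2) / (8 * s ^ 2)))) * C := by
              apply mul_le_mul _ (hb u) (abs_nonneg _) (by positivity)
              exact mul_le_mul_of_nonneg_left h3 (by positivity)
          _ = C * (a / s) * 4 * (Real.sqrt (2 * Real.pi))⁻¹ * Real.exp M
              * Real.exp (-(u ^ 2) / (8 * s ^ 2)) := by ring)
      hbd
      (Filter.Eventually.of_forall fun u x' _ => by
        -- pointwise derivative in x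
        have hin : HasDerivAt (fun x : ℝ => (u - a * x) / s) (-(a / s)) x' := by
          have : HasDerivAt (fun x : ℝ => u - a * x) (-a) x' := by
            simpa using (((hasDerivAt_id x').const_mul a).const_sub u)
          simpa [neg_div] using this.div_const s
        have hout := hasDerivAt_gpdf ((u - a * x') / s)
        have := (hout.comp x' hin).mul_const (F2 u)
        exact this.congr_deriv (by ring))
    exact hmain.2
  -- assemble
  have hfinal := hTd.const_mul s⁻¹
  refine hfinal.congr_deriv ?_
  -- identify derivative values
  have hpull : (∫ u, a / s * ((u - a * x₀) / s * gpdf ((u - a * x₀) / s)) * F2 u)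
      = a / s * ∫ u, ((u - a * x₀) / s * gpdf ((u - a * x₀) / s)) * F2 u := by
    rw [← integral_const_mul]
    congr 1; funext u; ring
  rw [hpull]
  have hcov := integral_comp_affine (fun y => (y * gpdf y) * F2 (a * x₀ + s * y)) (a * x₀) s hs
  have heq : (∫ u, (fun y => (y * gpdf y) * F2 (a * x₀ + s * y)) ((u - a * x₀) / s))
      = ∫ u, (((u - a * x₀) / s) * gpdf ((u - a * x₀) / s)) * F2 u := by
    congr 1; funext u
    show ((u - a * x₀) / s * gpdf ((u - a * x₀) / s)) * F2 (a * x₀ + s * ((u - a * x₀) / s))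
      = ((u - a * x₀) / s) * gpdf ((u - a * x₀) / s) * F2 u
    have : a * x₀ + s * ((u - a * x₀) / s) = u := by field_simp; ring
    rw [this]
  rw [heq] at hcov
  have hcov2 : (∫ u, ((u - a * x₀) / s * gpdf ((u - a * x₀) / s)) * F2 u)
      = s * ∫ y, (y * gpdf y) * F2 (a * x₀ + s * y) := hcov
  rw [hcov2]
  rw [gauss_integral_eq (fun y => F2 (a * x₀ + s * y) * y)]
  rw [show (∫ y, gpdf y * (F2 (a * x₀ + s * y) * y))
      = ∫ y, (y * gpdf y) * F2 (a * x₀ + s * y) from by congr 1; funext y; ring]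
  field_simp

lemma integrable_abs_gauss : Integrable (fun y : ℝ => |y|) (gaussianReal 0 1) := by
  rw [gaussianReal_of_var_ne_zero _ one_ne_zero]
  have hd : gaussianPDF 0 1 = fun x => (Real.toNNReal (gpdf x) : ENNReal) := by
    funext x; rw [gaussianPDF, gpdf_eq]; rfl
  rw [hd, integrable_withDensity_iff_integrable_smul continuous_gpdf.measurable.real_toNNReal]
  have hint : Integrable (fun u : ℝ => 4 * (Real.sqrt (2 * Real.pi))⁻¹
      * Real.exp (-(1/4 : ℝ) * u ^ 2)) :=
    (integrable_exp_neg_mul_sq (by norm_num)).const_mul _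
  apply hint.mono'
    (((continuous_real_toNNReal.comp continuous_gpdf).smul continuous_abs).aestronglyMeasurable)
  refine Filter.Eventually.of_forall fun y => ?_
  show ‖Real.toNNReal (gpdf y) • |y|‖ ≤ _
  rw [NNReal.smul_def, Real.coe_toNNReal _ (gpdf_nonneg y), smul_eq_mul, Real.norm_eq_abs]
  rw [abs_of_nonneg (mul_nonneg (gpdf_nonneg y) (abs_nonneg y))]
  unfold gpdf
  have h1 : |y| * Real.exp (-(y ^ 2) / 2)
      = (|y| * Real.exp (-(y ^ 2) / 4)) * Real.exp (-(y ^ 2) / 4) := by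
    rw [mul_assoc, ← Real.exp_add]; ring_nf
  calc (Real.sqrt (2 * Real.pi))⁻¹ * Real.exp (-(y ^ 2) / 2) * |y|
      = (Real.sqrt (2 * Real.pi))⁻¹ * (|y| * Real.exp (-(y ^ 2) / 2)) := by ring
    _ ≤ (Real.sqrt (2 * Real.pi))⁻¹ * (4 * Real.exp (-(y ^ 2) / 4)) := by
        apply mul_le_mul_of_nonneg_left _ (by positivity)
        rw [h1]
        exact mul_le_mul_of_nonneg_right (abs_mul_exp_le y) (Real.exp_nonneg _)
    _ = 4 * (Real.sqrt (2 * Real.pi))⁻¹ * Real.exp (-(1/4 : ℝ) * y ^ 2) := by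
        rw [show -(1/4 : ℝ) * y ^ 2 = -(y ^ 2) / 4 from by ring]; ring

/-- **Third derivative of the Ornstein–Uhlenbeck semigroup** via Gaussian integration by
parts: if `F ∈ C²_b`, then for `t > 0`, `P_t F` is three times differentiable with
`(P_t F)‴(x) = (e^{-3t}/√(1−e^{-2t})) ∫ F″(e^{-t}x + √(1−e^{-2t}) y) y dγ(y)`. -/
theorem ouSemigroup_third_deriv
    (F : ℝ → ℝ) (hF : ContDiff ℝ 2 F)
    (hFb : ∃ C, ∀ x, |F x| ≤ C)
    (hF'b : ∃ C, ∀ x, |deriv F x| ≤ C)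
    (hF''b : ∃ C, ∀ x, |deriv (deriv F) x| ≤ C)
    (t : ℝ) (ht : 0 < t) :
    ContDiff ℝ 3 (fun z => ouSemigroup t F z) ∧
    ∀ x : ℝ, iteratedDeriv 3 (fun z => ouSemigroup t F z) x
      = Real.exp (-3 * t) / Real.sqrt (1 - Real.exp (-2 * t)) *
        ∫ y, deriv (deriv F) (Real.exp (-t) * x + Real.sqrt (1 - Real.exp (-2 * t)) * y) * y
          ∂(gaussianReal 0 1) := by
  obtain ⟨C0, hC0⟩ := hFb
  obtain ⟨C1, hC1⟩ := hF'b
  obtain ⟨C2, hC2⟩ := hF''b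
  set a : ℝ := Real.exp (-t) with hA
  set s : ℝ := Real.sqrt (1 - Real.exp (-2 * t)) with hS
  have ha : 0 < a := Real.exp_pos _
  have hs : 0 < s := by
    rw [hS]
    apply Real.sqrt_pos.2
    have : Real.exp (-2 * t) < 1 := Real.exp_lt_one_iff.2 (by linarith)
    linarith
  have hF1 : ContDiff ℝ 1 F := hF.of_le (by norm_num)
  have hFd : ContDiff ℝ 1 (deriv F) := by
    rw [show (2 : WithTop ℕ∞) = 1 + 1 from rfl, contDiff_succ_iff_deriv] at hF
    exact hF.2.2
  have hFdc : Continuous (deriv (deriv F)) := hFd.continuous_deriv le_rfl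
  have hPdef : (fun z => ouSemigroup t F z)
      = fun x => ∫ y, F (a * x + s * y) ∂(gaussianReal 0 1) := rfl
  have h1 : ∀ x, HasDerivAt (fun z => ouSemigroup t F z)
      (a * ∫ y, deriv F (a * x + s * y) ∂(gaussianReal 0 1)) x := by
    intro x
    rw [hPdef]
    exact hasDerivAt_mehler F hF1 C0 hC0 C1 hC1 a s x
  have h2 : ∀ x, HasDerivAt (fun x => ∫ y, deriv F (a * x + s * y) ∂(gaussianReal 0 1))
      (a * ∫ y, deriv (deriv F) (a * x + s * y) ∂(gaussianReal 0 1)) x := fun x =>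
    hasDerivAt_mehler (deriv F) hFd C1 hC1 C2 hC2 a s x
  have h3 : ∀ x, HasDerivAt (fun x => ∫ y, deriv (deriv F) (a * x + s * y) ∂(gaussianReal 0 1))
      ((a / s) * ∫ y, deriv (deriv F) (a * x + s * y) * y ∂(gaussianReal 0 1)) x := fun x =>
    hasDerivAt_keystep (deriv (deriv F)) hFdc C2 hC2 a s ha hs x
  -- derivative identities
  have derivP : deriv (fun z => ouSemigroup t F z)
      = fun x => a * ∫ y, deriv F (a * x + s * y) ∂(gaussianReal 0 1) :=
    funext fun x => (h1 x).deriv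
  have h2' : ∀ x, HasDerivAt
      (fun x => a * ∫ y, deriv F (a * x + s * y) ∂(gaussianReal 0 1))
      (a * (a * ∫ y, deriv (deriv F) (a * x + s * y) ∂(gaussianReal 0 1))) x := fun x =>
    (h2 x).const_mul a
  have derivQ : deriv (fun x => a * ∫ y, deriv F (a * x + s * y) ∂(gaussianReal 0 1))
      = fun x => a * (a * ∫ y, deriv (deriv F) (a * x + s * y) ∂(gaussianReal 0 1)) :=
    funext fun x => (h2' x).deriv
  have h3' : ∀ x, HasDerivAt
      (fun x => a * (a * ∫ y, deriv (deriv F) (a * x + s * y) ∂(gaussianReal 0 1)))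
      (a * (a * ((a / s) * ∫ y, deriv (deriv F) (a * x + s * y) * y ∂(gaussianReal 0 1)))) x :=
    fun x => (((h3 x).const_mul a).const_mul a)
  -- continuity of the third derivative
  have hRcont : Continuous
      (fun x => ∫ y, deriv (deriv F) (a * x + s * y) * y ∂(gaussianReal 0 1)) := by
    apply continuous_of_dominated
      (F := fun x y => deriv (deriv F) (a * x + s * y) * y) (bound := fun y => C2 * |y|)
    · intro x
      exact ((hFdc.comp (by fun_prop)).mul continuous_id).aestronglyMeasurable
    · intro x
      refine Filter.Eventually.of_forall fun y => ?_
      rw [Real.norm_eq_abs, abs_mul]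
      exact mul_le_mul_of_nonneg_right (hC2 _) (abs_nonneg y)
    · exact integrable_abs_gauss.const_mul C2
    · refine Filter.Eventually.of_forall fun y => ?_
      exact (hFdc.comp (by fun_prop)).mul continuous_const
  constructor
  · rw [show (3 : WithTop ℕ∞) = 2 + 1 from rfl, contDiff_succ_iff_deriv]
    refine ⟨fun x => (h1 x).differentiableAt, by intro hh; exact absurd hh (by norm_num), ?_⟩
    rw [derivP, show (2 : WithTop ℕ∞) = 1 + 1 from rfl, contDiff_succ_iff_deriv]
    refine ⟨fun x => (h2' x).differentiableAt, by intro hh; exact absurd hh (by norm_num), ?_⟩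
    rw [derivQ, show (1 : WithTop ℕ∞) = 0 + 1 from rfl, contDiff_succ_iff_deriv]
    refine ⟨fun x => (h3' x).differentiableAt, by intro hh; exact absurd hh (by norm_num), ?_⟩
    rw [contDiff_zero]
    have : deriv (fun x => a * (a * ∫ y, deriv (deriv F) (a * x + s * y) ∂(gaussianReal 0 1)))
        = fun x => a * (a * ((a / s) * ∫ y, deriv (deriv F) (a * x + s * y) * y
          ∂(gaussianReal 0 1))) := funext fun x => (h3' x).deriv
    rw [this]
    exact continuous_const.mul (continuous_const.mul (continuous_const.mul hRcont))
  · intro x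
    rw [show (3 : ℕ) = 2 + 1 from rfl, iteratedDeriv_succ,
      iteratedDeriv_succ,
      iteratedDeriv_one]
    rw [derivP, derivQ]
    rw [(h3' x).deriv]
    have hexp : Real.exp (-3 * t) = a ^ 3 := by
      rw [hA, show (-3 : ℝ) * t = (3 : ℕ) * (-t) from by push_cast; ring, Real.exp_nat_mul]
    rw [hexp]
    field_simp
end

section
/- Uniform bound on the third derivative of the Ornstein–Uhlenbeck semigroup: let γ denote the standard Gaussian measure on ℝ and for t ≥ 0 define P_tF(x) = ∫ F(e^{-t}x + √(1−e^{-2t}) y) dγ(y). If F : ℝ → ℝ is twice continuously differentiable with F, F′, F″ bounded, then for every t > 0 and every x ∈ ℝ, |(P_tF)‴(x)| ≤ (e^{-3t}/√(1−e^{-2t})) · ‖F″‖_∞ · ∫ |y| dγ(y) = (e^{-3t}/√(1−e^{-2t})) · ‖F″‖_∞ · √(2/π). -/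
open MeasureTheory Real ProbabilityTheory

section Helpers
set_option maxHeartbeats 1000000
open Filter NNReal

lemma integral_gaussianReal_eq (μ : ℝ) {v : ℝ≥0} (hv : v ≠ 0) (f : ℝ → ℝ) :
    ∫ y, f y ∂(gaussianReal μ v) = ∫ y, gaussianPDFReal μ v y * f y := by
  rw [gaussianReal_of_var_ne_zero _ hv, gaussianPDF_def]
  have h : (fun x => ENNReal.ofReal (gaussianPDFReal μ v x))
      = fun x => ((Real.toNNReal (gaussianPDFReal μ v x) : ℝ≥0) : ENNReal) := rfl
  rw [h, integral_withDensity_eq_integral_smul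
    (measurable_gaussianPDFReal μ v).real_toNNReal f]
  congr 1
  ext y
  simp [NNReal.smul_def, Real.coe_toNNReal _ (gaussianPDFReal_nonneg μ v y)]

lemma map_affine (c b : ℝ) :
    (gaussianReal 0 1).map (fun y => c + b * y)
      = gaussianReal c (⟨b ^ 2, sq_nonneg b⟩ : ℝ≥0) := by
  have h1 : (gaussianReal 0 1).map (fun y => b * y)
      = gaussianReal 0 (⟨b ^ 2, sq_nonneg b⟩ : ℝ≥0) := by
    have h := gaussianReal_map_const_mul (μ := 0) (v := 1) b
    simp at h
    exact h
  have h2 : (fun y : ℝ => c + b * y) = (fun y : ℝ => c + y) ∘ (fun y : ℝ => b * y) := rfl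
  rw [h2, ← Measure.map_map (measurable_const_add c) (measurable_const_mul b), h1]
  convert gaussianReal_map_const_add (μ := 0) (v := ⟨b ^ 2, sq_nonneg b⟩) c using 2
  simp

lemma gauss_comp_eq {G : ℝ → ℝ} (hG : Continuous G) (c b : ℝ) (hb : b ≠ 0) :
    ∫ y, G (c + b * y) ∂(gaussianReal 0 1)
      = ∫ u, gaussianPDFReal c (⟨b ^ 2, sq_nonneg b⟩ : ℝ≥0) u * G u := by
  have hv : (⟨b ^ 2, sq_nonneg b⟩ : ℝ≥0) ≠ 0 := by
    intro h
    have h2 := congrArg NNReal.toReal h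
    change b ^ 2 = 0 at h2
    exact pow_ne_zero 2 hb h2
  rw [← integral_gaussianReal_eq c hv, ← map_affine c b,
    integral_map (by fun_prop) hG.aestronglyMeasurable]

lemma Ioi_int : ∫ y in Set.Ioi (0:ℝ), y * Real.exp (-(2:ℝ)⁻¹ * y ^ 2) = 1 := by
  have A : ∀ y : ℝ, HasDerivAt (fun z => -Real.exp (-(2:ℝ)⁻¹ * z ^ 2))
      (y * Real.exp (-(2:ℝ)⁻¹ * y ^ 2)) y := by
    intro y
    have h := ((hasDerivAt_pow 2 y).const_mul (-(2:ℝ)⁻¹)).exp.neg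
    exact h.congr_deriv (by ring)
  have B : Filter.Tendsto (fun z : ℝ => -Real.exp (-(2:ℝ)⁻¹ * z ^ 2)) Filter.atTop (nhds (-0)) := by
    refine Filter.Tendsto.neg ?_
    refine Real.tendsto_exp_atBot.comp ?_
    exact (Filter.tendsto_pow_atTop two_ne_zero).const_mul_atTop_of_neg (by norm_num)
  have h := integral_Ioi_of_hasDerivAt_of_tendsto' (a := 0)
    (f := fun z => -Real.exp (-(2:ℝ)⁻¹ * z ^ 2))
    (fun x _ => A x) ((integrable_mul_exp_neg_mul_sq (by norm_num : (0:ℝ) < 2⁻¹)).integrableOn) B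
  simpa using h

lemma abs_moment : (∫ y, |y| ∂(gaussianReal 0 1)) = Real.sqrt (2 / Real.pi) := by
  rw [integral_gaussianReal_eq 0 one_ne_zero]
  have h1 : ∀ y : ℝ, gaussianPDFReal 0 1 y * |y|
      = (Real.sqrt (2 * Real.pi))⁻¹ * (|y| * Real.exp (-(2:ℝ)⁻¹ * y^2)) := by
    intro y
    simp only [gaussianPDFReal, NNReal.coe_one, mul_one, sub_zero]
    ring_nf
  simp_rw [h1]
  rw [integral_const_mul]
  have h2 : (fun y : ℝ => |y| * Real.exp (-(2:ℝ)⁻¹ * y^2))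
      = fun y : ℝ => |y| * Real.exp (-(2:ℝ)⁻¹ * |y|^2) := by
    ext y; rw [sq_abs]
  have h3 : ∫ y : ℝ, |y| * Real.exp (-(2:ℝ)⁻¹ * y^2) = 2 := by
    rw [h2, integral_comp_abs (f := fun y : ℝ => y * Real.exp (-(2:ℝ)⁻¹ * y^2)), Ioi_int]
    norm_num
  rw [h3]
  rw [Real.sqrt_div (by norm_num : (0:ℝ) ≤ 2), Real.sqrt_mul (by norm_num : (0:ℝ) ≤ 2)]
  have hpi : Real.sqrt Real.pi ≠ 0 := by positivity
  have hsq2 : Real.sqrt 2 ≠ 0 := by positivity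
  field_simp
  nlinarith [Real.sq_sqrt (by norm_num : (0:ℝ) ≤ 2), Real.sqrt_nonneg 2, Real.sqrt_nonneg Real.pi]

lemma hasDerivAt_gauss_integral {G : ℝ → ℝ} (hG : Differentiable ℝ G)
    (hGc : Continuous (deriv G)) (BG B : ℝ) (hGb : ∀ z, |G z| ≤ BG) (hB : ∀ z, |deriv G z| ≤ B)
    (a b x : ℝ) :
    HasDerivAt (fun x => ∫ y, G (a * x + b * y) ∂(gaussianReal 0 1))
      (a * ∫ y, deriv G (a * x + b * y) ∂(gaussianReal 0 1)) x := by
  have hGcont : Continuous G := hG.continuous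
  have key := hasDerivAt_integral_of_dominated_loc_of_deriv_le (μ := gaussianReal 0 1)
    (F := fun x y => G (a * x + b * y)) (F' := fun x y => a * deriv G (a * x + b * y))
    (x₀ := x) (bound := fun _ => |a| * B) (s := Metric.ball x 1) (Metric.ball_mem_nhds x one_pos)
    (Eventually.of_forall fun x' =>
      (hGcont.comp (by continuity)).aestronglyMeasurable)
    (Integrable.mono' (integrable_const BG)
      (hGcont.comp (by continuity)).aestronglyMeasurable
      (ae_of_all _ fun y => by simpa [Real.norm_eq_abs] using hGb (a * x + b * y)))
    ((continuous_const.mul (hGc.comp (by continuity))).aestronglyMeasurable)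
    (ae_of_all _ fun y x' _ => by
      rw [Real.norm_eq_abs, abs_mul]
      exact mul_le_mul_of_nonneg_left (hB _) (abs_nonneg a))
    (integrable_const _)
    (ae_of_all _ fun y x' _ => by
      have h1 : HasDerivAt (fun x => a * x + b * y) a x' := by
        simpa using ((hasDerivAt_id x').const_mul a).add_const (b * y)
      have h2 := ((hG (a * x' + b * y)).hasDerivAt).comp x' h1
      simpa [mul_comm, Function.comp_def] using h2)
  have h3 := key.2
  rwa [integral_const_mul] at h3

lemma int_abs_exp {c : ℝ} (hc : 0 < c) :
    Integrable (fun w : ℝ => |w| * Real.exp (-c * w ^ 2)) := by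
  have h := (integrable_mul_exp_neg_mul_sq hc).abs
  simpa [abs_mul, abs_of_pos (Real.exp_pos _)] using h

lemma key_step (φ : ℝ → ℝ) (hφc : Continuous φ) (C : ℝ) (hφb : ∀ z, |φ z| ≤ C)
    (a b : ℝ) (ha0 : 0 < a) (ha1 : a ≤ 1) (hb : 0 < b) (x : ℝ) :
    ∃ D, HasDerivAt (fun x' => ∫ y, φ (a * x' + b * y) ∂(gaussianReal 0 1)) D x ∧
      |D| ≤ a / b * C * ∫ y, |y| ∂(gaussianReal 0 1) := by
  have hC : 0 ≤ C := le_trans (abs_nonneg _) (hφb 0)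
  set s : ℝ := b ^ 2 with hs
  have hs0 : 0 < s := by positivity
  set k : ℝ := (Real.sqrt (2 * Real.pi * s))⁻¹ with hk
  have hk0 : 0 < k := by
    rw [hk]
    have : 0 < Real.sqrt (2 * Real.pi * s) := Real.sqrt_pos.mpr (by positivity)
    positivity
  have hpdf : ∀ (c u : ℝ), gaussianPDFReal c (⟨b ^ 2, sq_nonneg b⟩ : ℝ≥0) u
      = k * Real.exp (-((u - c) ^ 2 / (2 * s))) := by
    intro c u
    simp only [gaussianPDFReal, NNReal.coe_mk, hk, hs, neg_div]
    rfl
  have hrw : (fun x' : ℝ => ∫ y, φ (a * x' + b * y) ∂(gaussianReal 0 1))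
      = fun x' => ∫ u, k * Real.exp (-((u - a * x') ^ 2 / (2 * s))) * φ u := by
    funext x'
    rw [gauss_comp_eq hφc (a * x') b hb.ne']
    simp_rw [hpdf]
  -- derivative via dominated convergence
  have hdiff : ∀ (u x' : ℝ), HasDerivAt (fun z => k * Real.exp (-((u - a * z) ^ 2 / (2 * s))) * φ u)
      (k * Real.exp (-((u - a * x') ^ 2 / (2 * s))) * (a / s) * (u - a * x') * φ u) x' := by
    intro u x'
    have h1 : HasDerivAt (fun z : ℝ => u - a * z) (-a) x' := by
      simpa using ((hasDerivAt_id x').const_mul a).const_sub u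
    have h2 := (((h1.pow 2).div_const (2 * s)).neg.exp.const_mul k).mul_const (φ u)
    exact h2.congr_deriv (by simp only [Pi.neg_apply, Pi.pow_apply]; ring)
  have cexp : ∀ c q : ℝ, Continuous fun u : ℝ => Real.exp (-((u - q) ^ 2 / c)) := fun c q =>
    Real.continuous_exp.comp ((((continuous_id.sub continuous_const).pow 2).div_const c).neg)
  have hcont : ∀ x' : ℝ, Continuous fun u => k * Real.exp (-((u - a * x') ^ 2 / (2 * s))) * φ u :=
    fun x' => (continuous_const.mul (cexp (2 * s) (a * x'))).mul hφc
  have hcont' : Continuous fun u => k * Real.exp (-((u - a * x) ^ 2 / (2 * s))) * (a / s) * (u - a * x) * φ u :=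
    (((continuous_const.mul (cexp (2 * s) (a * x))).mul continuous_const).mul
      (continuous_id.sub continuous_const)).mul hφc
  -- integrability helpers
  have Iexp : ∀ (c q : ℝ), 0 < c → Integrable (fun u : ℝ => Real.exp (-((u - q) ^ 2 / c))) := by
    intro c q hcpos
    have h1 : Integrable (fun w : ℝ => Real.exp (-c⁻¹ * w ^ 2)) :=
      integrable_exp_neg_mul_sq (by positivity)
    have h2 := h1.comp_sub_right q
    refine h2.congr (ae_of_all _ fun u => ?_)
    simp only [neg_mul, inv_mul_eq_div]
  have Iabs : ∀ (c q : ℝ), 0 < c → Integrable (fun u : ℝ => |u - q| * Real.exp (-((u - q) ^ 2 / c))) := by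
    intro c q hcpos
    have h1 := (int_abs_exp (c := c⁻¹) (by positivity)).comp_sub_right q
    refine h1.congr (ae_of_all _ fun u => ?_)
    simp only [neg_mul, inv_mul_eq_div]
  have key := hasDerivAt_integral_of_dominated_loc_of_deriv_le (μ := (volume : Measure ℝ))
    (F := fun x' u => k * Real.exp (-((u - a * x') ^ 2 / (2 * s))) * φ u)
    (F' := fun x' u => k * Real.exp (-((u - a * x') ^ 2 / (2 * s))) * (a / s) * (u - a * x') * φ u)
    (x₀ := x)
    (bound := fun u => k * (Real.exp (1 / (2 * s)) * Real.exp (-((u - a * x) ^ 2 / (4 * s)))) * (a / s)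
      * (|u - a * x| + 1) * C)
    (s := Metric.ball x 1) (Metric.ball_mem_nhds x one_pos)
    (Eventually.of_forall fun x' => (hcont x').aestronglyMeasurable)
    (by -- integrability at x
      refine Integrable.mono' (((Iexp (2 * s) (a * x) (by positivity)).const_mul (k * C)))
        (hcont x).aestronglyMeasurable (ae_of_all _ fun u => ?_)
      rw [Real.norm_eq_abs, abs_mul, abs_mul, abs_of_pos hk0, abs_of_pos (Real.exp_pos _)]
      calc k * Real.exp (-((u - a * x) ^ 2 / (2 * s))) * |φ u|
          ≤ k * Real.exp (-((u - a * x) ^ 2 / (2 * s))) * C := by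
            gcongr
            all_goals exact hφb u
        _ = k * C * Real.exp (-((u - a * x) ^ 2 / (2 * s))) := by ring)
    hcont'.aestronglyMeasurable
    (ae_of_all _ fun u => by -- bound
      intro x' hx'
      have hdist : |x' - x| ≤ 1 := by
        rw [Metric.mem_ball, Real.dist_eq] at hx'
        exact hx'.le
      set w : ℝ := u - a * x with hw
      set d : ℝ := u - a * x' with hd
      have hwd : |w - d| ≤ 1 := by
        have : w - d = a * (x' - x) := by rw [hw, hd]; ring
        rw [this, abs_mul, abs_of_pos ha0]
        calc a * |x' - x| ≤ 1 * 1 := by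
              apply mul_le_mul ha1 hdist (abs_nonneg _) zero_le_one
          _ = 1 := one_mul 1
      have hd_le : |d| ≤ |w| + 1 := by
        calc |d| = |w - (w - d)| := by ring_nf
          _ ≤ |w| + |w - d| := abs_sub _ _
          _ ≤ |w| + 1 := by linarith
      have hexp_le : Real.exp (-(d ^ 2 / (2 * s)))
          ≤ Real.exp (1 / (2 * s)) * Real.exp (-(w ^ 2 / (4 * s))) := by
        rw [← Real.exp_add]
        apply Real.exp_le_exp.mpr
        have hsq : w ^ 2 ≤ 2 * d ^ 2 + 2 := by
          have h1 : (w - d) ^ 2 ≤ 1 := by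
            calc (w - d) ^ 2 = |w - d| ^ 2 := (sq_abs _).symm
              _ ≤ 1 ^ 2 := by gcongr
              _ = 1 := one_pow 2
          nlinarith [sq_nonneg (w - 2 * d)]
        have heq : (1 / (2 * s) + -(w ^ 2 / (4 * s))) - (-(d ^ 2 / (2 * s)))
            = (2 * d ^ 2 + 2 - w ^ 2) / (4 * s) := by ring
        have : 0 ≤ (2 * d ^ 2 + 2 - w ^ 2) / (4 * s) := by
          apply div_nonneg (by linarith) (by positivity)
        linarith [heq ▸ this]
      rw [Real.norm_eq_abs, abs_mul, abs_mul, abs_mul, abs_mul, abs_of_pos hk0,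
        abs_of_pos (Real.exp_pos _), abs_of_pos (div_pos ha0 hs0)]
      calc k * Real.exp (-(d ^ 2 / (2 * s))) * (a / s) * |d| * |φ u|
          ≤ k * (Real.exp (1 / (2 * s)) * Real.exp (-(w ^ 2 / (4 * s)))) * (a / s) * (|w| + 1) * C := by
            gcongr
            all_goals exact hφb u
        _ = k * (Real.exp (1 / (2 * s)) * Real.exp (-((u - a * x) ^ 2 / (4 * s)))) * (a / s)
              * (|u - a * x| + 1) * C := by rw [hw])
    (by -- bound integrable
      have h1 : Integrable (fun u : ℝ => |u - a * x| * Real.exp (-((u - a * x) ^ 2 / (4 * s)))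
          + Real.exp (-((u - a * x) ^ 2 / (4 * s)))) :=
        (Iabs (4 * s) (a * x) (by positivity)).add (Iexp (4 * s) (a * x) (by positivity))
      refine (h1.const_mul (k * Real.exp (1 / (2 * s)) * (a / s) * C)).congr
        (ae_of_all _ fun u => ?_)
      ring)
    (ae_of_all _ fun u x' _ => hdiff u x')
  obtain ⟨hFint, hder⟩ := key
  refine ⟨_, by rw [hrw]; exact hder, ?_⟩
  -- bound the derivative value
  have hEnn : 0 ≤ ∫ y, |y| ∂(gaussianReal 0 1) := integral_nonneg fun y => abs_nonneg y
  have hb2 : ∫ u, gaussianPDFReal (a * x) (⟨b ^ 2, sq_nonneg b⟩ : ℝ≥0) u * |u - a * x|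
      = b * ∫ y, |y| ∂(gaussianReal 0 1) := by
    rw [← gauss_comp_eq (G := fun u => |u - a * x|) (by fun_prop) (a * x) b hb.ne']
    simp_rw [add_sub_cancel_left, abs_mul, abs_of_pos hb]
    rw [integral_const_mul]
  have hle := norm_integral_le_of_norm_le
    (f := fun u => k * Real.exp (-((u - a * x) ^ 2 / (2 * s))) * (a / s) * (u - a * x) * φ u)
    (g := fun u => a / s * C * (gaussianPDFReal (a * x) (⟨b ^ 2, sq_nonneg b⟩ : ℝ≥0) u * |u - a * x|))
    (by
      have h2 : Integrable (fun u : ℝ => |u - a * x| * Real.exp (-((u - a * x) ^ 2 / (2 * s)))) :=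
        Iabs (2 * s) (a * x) (by positivity)
      refine (h2.const_mul (a / s * C * k)).congr (ae_of_all _ fun u => ?_)
      beta_reduce
      rw [hpdf]
      ring)
    (ae_of_all _ fun u => by
      beta_reduce
      rw [Real.norm_eq_abs, abs_mul, abs_mul, abs_mul, abs_mul, abs_of_pos hk0,
        abs_of_pos (Real.exp_pos _), abs_of_pos (div_pos ha0 hs0), hpdf]
      calc k * Real.exp (-((u - a * x) ^ 2 / (2 * s))) * (a / s) * |u - a * x| * |φ u|
          ≤ k * Real.exp (-((u - a * x) ^ 2 / (2 * s))) * (a / s) * |u - a * x| * C := by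
            gcongr
            exact hφb u
        _ = a / s * C * (k * Real.exp (-((u - a * x) ^ 2 / (2 * s))) * |u - a * x|) := by ring)
  rw [integral_const_mul, hb2, Real.norm_eq_abs] at hle
  calc |∫ u, k * Real.exp (-((u - a * x) ^ 2 / (2 * s))) * (a / s) * (u - a * x) * φ u|
      ≤ a / s * C * (b * ∫ y, |y| ∂(gaussianReal 0 1)) := hle
    _ = a / b * C * ∫ y, |y| ∂(gaussianReal 0 1) := by
        rw [hs]
        field_simp

end Helpers

set_option maxHeartbeats 1000000

/-- **Uniform bound on the third derivative of the Ornstein–Uhlenbeck semigroup**: if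
`F ∈ C²_b` with `‖F″‖_∞ ≤ C`, then for every `t > 0` and every `x`,
`|(P_t F)‴(x)| ≤ (e^{-3t}/√(1−e^{-2t})) · C · ∫ |y| dγ(y)
             = (e^{-3t}/√(1−e^{-2t})) · C · √(2/π)`. -/
theorem ouSemigroup_third_deriv_bound
    (F : ℝ → ℝ) (hF : ContDiff ℝ 2 F) (C : ℝ)
    (hFb : ∃ B, ∀ x, |F x| ≤ B)
    (hF'b : ∃ B, ∀ x, |deriv F x| ≤ B)
    (hF''b : ∀ x, |deriv (deriv F) x| ≤ C)
    (t : ℝ) (ht : 0 < t) (x : ℝ) :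
    |iteratedDeriv 3 (fun z => ouSemigroup t F z) x|
      ≤ Real.exp (-3 * t) / Real.sqrt (1 - Real.exp (-2 * t)) * C
          * ∫ y, |y| ∂(gaussianReal 0 1)
    ∧ (∫ y, |y| ∂(gaussianReal 0 1)) = Real.sqrt (2 / Real.pi) := by
  refine ⟨?_, abs_moment⟩
  obtain ⟨BF, hBF⟩ := hFb
  obtain ⟨B1, hB1⟩ := hF'b
  have ht2 : Real.exp (-2 * t) < 1 := by
    rw [Real.exp_lt_one_iff]
    linarith
  set a : ℝ := Real.exp (-t) with ha
  set b : ℝ := Real.sqrt (1 - Real.exp (-2 * t)) with hbdef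
  have ha0 : 0 < a := Real.exp_pos _
  have ha1 : a ≤ 1 := Real.exp_le_one_iff.mpr (by linarith)
  have hb0 : 0 < b := Real.sqrt_pos.mpr (by linarith)
  -- smoothness facts
  have hF2 : ContDiff ℝ (1 + 1 : ℕ) F := by exact_mod_cast hF
  have hFd : Differentiable ℝ F := hF2.differentiable (by norm_num)
  have hder := (contDiff_succ_iff_deriv (n := 1)).mp (by exact_mod_cast hF2)
  have hF1 : ContDiff ℝ 1 (deriv F) := hder.2.2
  have hF'c : Continuous (deriv F) := hF1.continuous
  have hFd' : Differentiable ℝ (deriv F) := hF1.differentiable one_ne_zero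
  have hder2 := (contDiff_succ_iff_deriv (n := 0)).mp (by exact_mod_cast hF1)
  have hF''c : Continuous (deriv (deriv F)) := hder2.2.2.continuous
  -- the function
  have hfun : (fun z => ouSemigroup t F z)
      = fun z => ∫ y, F (a * z + b * y) ∂(gaussianReal 0 1) := rfl
  have step1 : ∀ z : ℝ, HasDerivAt (fun z => ouSemigroup t F z)
      (a * ∫ y, deriv F (a * z + b * y) ∂(gaussianReal 0 1)) z := by
    intro z
    rw [hfun]
    exact hasDerivAt_gauss_integral hFd hF'c BF B1 hBF hB1 a b z
  have hg1 : deriv (fun z => ouSemigroup t F z)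
      = fun z => a * ∫ y, deriv F (a * z + b * y) ∂(gaussianReal 0 1) :=
    funext fun z => (step1 z).deriv
  have step2 : ∀ z : ℝ, HasDerivAt (fun z => ∫ y, deriv F (a * z + b * y) ∂(gaussianReal 0 1))
      (a * ∫ y, deriv (deriv F) (a * z + b * y) ∂(gaussianReal 0 1)) z :=
    fun z => hasDerivAt_gauss_integral hFd' hF''c B1 C hB1 hF''b a b z
  have hg2 : deriv (deriv (fun z => ouSemigroup t F z))
      = fun z => a * (a * ∫ y, deriv (deriv F) (a * z + b * y) ∂(gaussianReal 0 1)) := by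
    funext z
    rw [hg1]
    exact ((step2 z).const_mul a).deriv
  obtain ⟨D, hD, hDle⟩ := key_step (deriv (deriv F)) hF''c C hF''b a b ha0 ha1 hb0 x
  have third : HasDerivAt (deriv (deriv (fun z => ouSemigroup t F z))) (a * (a * D)) x := by
    rw [hg2]
    exact ((hD.const_mul a).const_mul a)
  have hiter : iteratedDeriv 3 (fun z => ouSemigroup t F z)
      = deriv (deriv (deriv (fun z => ouSemigroup t F z))) := by
    rw [show (3:ℕ) = 2 + 1 from rfl, iteratedDeriv_succ,
      show (2:ℕ) = 1 + 1 from rfl, iteratedDeriv_succ, iteratedDeriv_one]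
  rw [hiter, third.deriv, abs_mul, abs_mul, abs_of_pos ha0]
  have hE0 : 0 ≤ ∫ y, |y| ∂(gaussianReal 0 1) := integral_nonneg fun y => abs_nonneg y
  have hstep := mul_le_mul_of_nonneg_left
    (mul_le_mul_of_nonneg_left hDle ha0.le) ha0.le
  refine le_trans hstep (le_of_eq ?_)
  have ha3 : Real.exp (-3 * t) = a ^ 3 := by
    rw [ha, ← Real.exp_nat_mul]
    norm_num
  rw [ha3]
  ring
end

section
/- Taylor–Stein identity for the normalized Poisson variable: let Z_λ be a Poisson random variable with parameter λ > 0, Ẑ_λ = (Z_λ − λ)/√λ, and let ψ : ℝ → ℝ be three times continuously differentiable with ψ, ψ′, ψ″, ψ‴ bounded. Then E[Ẑ_λ ψ′(Ẑ_λ) − ψ″(Ẑ_λ)] = λ^{-1/2} ∫₀¹ (1−r) E[ψ‴(Ẑ_λ + r/√λ)] dr. -/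
open MeasureTheory Real ProbabilityTheory
open scoped ENNReal NNReal Nat

section Aux

variable {ψ : ℝ → ℝ}

private lemma hasDerivAt_iter (hψ : ContDiff ℝ 3 ψ) {m : ℕ} (hm : m < 3) (y : ℝ) :
    HasDerivAt (iteratedDeriv m ψ) (iteratedDeriv (m + 1) ψ y) y := by
  rw [iteratedDeriv_succ]
  exact (hψ.differentiable_iteratedDeriv m (by exact_mod_cast hm) y).hasDerivAt

private lemma taylor_aux (hψ : ContDiff ℝ 3 ψ) (a h : ℝ) :
    ∫ r in (0:ℝ)..1, (1 - r) * (h ^ 2 * iteratedDeriv 3 ψ (a + r * h))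
      = deriv ψ (a + h) - deriv ψ a - h * iteratedDeriv 2 ψ a := by
  have key : ∀ m : ℕ, m < 3 → ∀ r : ℝ,
      HasDerivAt (fun t : ℝ => iteratedDeriv m ψ (a + t * h))
        (iteratedDeriv (m + 1) ψ (a + r * h) * h) r := by
    intro m hm r
    have hu : HasDerivAt (fun t : ℝ => a + t * h) h r := by
      simpa using ((hasDerivAt_id r).mul_const h).const_add a
    exact (hasDerivAt_iter hψ hm (a + r * h)).comp r hu
  set F : ℝ → ℝ := fun r =>
    iteratedDeriv 1 ψ (a + r * h) + (1 - r) * (h * iteratedDeriv 2 ψ (a + r * h)) with hF_def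
  have hF : ∀ r : ℝ, HasDerivAt F ((1 - r) * (h ^ 2 * iteratedDeriv 3 ψ (a + r * h))) r := by
    intro r
    have term1 := key 1 (by norm_num) r
    have hc : HasDerivAt (fun t : ℝ => 1 - t) (-1) r := by
      simpa using (hasDerivAt_id r).const_sub 1
    have hd : HasDerivAt (fun t : ℝ => h * iteratedDeriv 2 ψ (a + t * h))
        (h * (iteratedDeriv 3 ψ (a + r * h) * h)) r := (key 2 (by norm_num) r).const_mul h
    have := term1.add (hc.mul hd)
    convert this using 1
    · rfl
    · rfl
    · rfl
    · rw [show (1:ℕ) + 1 = 2 from rfl]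
      ring
  have hc3 : Continuous (iteratedDeriv 3 ψ) := hψ.continuous_iteratedDeriv 3 (by exact_mod_cast le_rfl)
  have cont : Continuous fun r : ℝ => (1 - r) * (h ^ 2 * iteratedDeriv 3 ψ (a + r * h)) :=
    (continuous_const.sub continuous_id).mul (continuous_const.mul
      (hc3.comp (continuous_const.add (continuous_id.mul continuous_const))))
  have := intervalIntegral.integral_eq_sub_of_hasDerivAt (f := F)
    (fun r _ => hF r) (cont.intervalIntegrable 0 1)
  rw [this]
  simp only [hF_def, iteratedDeriv_one]
  ring_nf

private lemma pois_singleton (lam : NNReal) (n : ℕ) :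
    poissonMeasure lam {n} = ENNReal.ofReal (poissonPMFReal lam n) := by
  rw [poissonMeasure_singleton]
  rfl

private lemma integrable_poisson (lam : NNReal) {f : ℕ → ℝ}
    (h : Summable fun n => poissonPMFReal lam n * |f n|) :
    Integrable f (poissonMeasure lam) := by
  refine ⟨measurable_from_nat.aestronglyMeasurable, ?_⟩
  rw [HasFiniteIntegral, lintegral_countable']
  have heq : ∀ n : ℕ, ‖f n‖ₑ * poissonMeasure lam {n}
      = ENNReal.ofReal (poissonPMFReal lam n * |f n|) := by
    intro n
    rw [pois_singleton, ENNReal.ofReal_mul poissonPMFReal_nonneg, mul_comm]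
    congr 1
    rw [← Real.norm_eq_abs]
    exact (ofReal_norm (f n)).symm
  rw [tsum_congr heq, ← ENNReal.ofReal_tsum_of_nonneg
    (fun n => mul_nonneg poissonPMFReal_nonneg (abs_nonneg _)) h]
  exact ENNReal.ofReal_lt_top

private lemma integral_poisson (lam : NNReal) {f : ℕ → ℝ}
    (hf : Integrable f (poissonMeasure lam)) :
    ∫ n, f n ∂(poissonMeasure lam) = ∑' n, poissonPMFReal lam n * f n := by
  rw [integral_poissonMeasure' hf]
  simp only [smul_eq_mul]
  rfl

private lemma pois_succ (lam : NNReal) (n : ℕ) :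
    ((n : ℝ) + 1) * poissonPMFReal lam (n + 1) = (lam : ℝ) * poissonPMFReal lam n := by
  unfold poissonPMFReal
  rw [Nat.factorial_succ, pow_succ]
  push_cast
  have h1 : (n : ℝ) + 1 ≠ 0 := by positivity
  have h2 : (n ! : ℝ) ≠ 0 := by exact_mod_cast Nat.factorial_ne_zero n
  field_simp

end Aux

/-- **Taylor–Stein identity for the normalized Poisson variable**: for `Z_λ` Poisson of
parameter `λ > 0`, `Ẑ_λ = (Z_λ − λ)/√λ`, and `ψ ∈ C³` with `ψ, ψ′, ψ″, ψ‴` bounded,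
`E[Ẑ_λ ψ′(Ẑ_λ) − ψ″(Ẑ_λ)] = λ^{-1/2} ∫₀¹ (1−r) E[ψ‴(Ẑ_λ + r/√λ)] dr`. -/
theorem taylor_stein_identity_normalized_poisson
    (lam : NNReal) (hlam : 0 < lam) (ψ : ℝ → ℝ) (hψ : ContDiff ℝ 3 ψ)
    (hb0 : ∃ C, ∀ x, |ψ x| ≤ C)
    (hb1 : ∃ C, ∀ x, |deriv ψ x| ≤ C)
    (hb2 : ∃ C, ∀ x, |iteratedDeriv 2 ψ x| ≤ C)
    (hb3 : ∃ C, ∀ x, |iteratedDeriv 3 ψ x| ≤ C) :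
    ∫ n, (((n : ℝ) - lam) / Real.sqrt lam * deriv ψ (((n : ℝ) - lam) / Real.sqrt lam)
        - iteratedDeriv 2 ψ (((n : ℝ) - lam) / Real.sqrt lam)) ∂(poissonMeasure lam)
      = (Real.sqrt lam)⁻¹ *
          ∫ r in (0 : ℝ)..1, (1 - r) *
            ∫ n, iteratedDeriv 3 ψ (((n : ℝ) - lam) / Real.sqrt lam + r / Real.sqrt lam)
              ∂(poissonMeasure lam) := by
  obtain ⟨C1, hC1⟩ := hb1
  obtain ⟨C2, hC2⟩ := hb2
  obtain ⟨C3, hC3⟩ := hb3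
  have hC1' : 0 ≤ C1 := le_trans (abs_nonneg _) (hC1 0)
  have hC2' : 0 ≤ C2 := le_trans (abs_nonneg _) (hC2 0)
  have hC3' : 0 ≤ C3 := le_trans (abs_nonneg _) (hC3 0)
  set s : ℝ := Real.sqrt lam with hs_def
  have hs : 0 < s := Real.sqrt_pos.mpr (by exact_mod_cast hlam)
  have hs0 : s ≠ 0 := ne_of_gt hs
  have hs2 : s * s = (lam : ℝ) := Real.mul_self_sqrt lam.coe_nonneg
  set x : ℕ → ℝ := fun n => ((n : ℝ) - (lam : ℝ)) / s with hx_def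
  set p : ℕ → ℝ := poissonPMFReal lam with hp_def
  have hp_nn : ∀ n, 0 ≤ p n := fun n => poissonPMFReal_nonneg
  have hp : Summable p := (poissonPMFRealSum lam).summable
  set g : ℝ → ℝ := deriv ψ with hg_def
  set g2 : ℝ → ℝ := iteratedDeriv 2 ψ with hg2_def
  set g3 : ℝ → ℝ := iteratedDeriv 3 ψ with hg3_def
  -- generic summability helper
  have sum_helper : ∀ (f M : ℕ → ℝ), Summable M → (∀ n, |f n| ≤ M n) → Summable f := by
    intro f M hM h
    exact Summable.of_abs (Summable.of_nonneg_of_le (fun n => abs_nonneg _) h hM)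
  -- summability of n * p n
  have hnp : Summable (fun n : ℕ => (n : ℝ) * p n) := by
    have h1 : Summable (fun n : ℕ => ((n + 1 : ℕ) : ℝ) * p (n + 1)) := by
      refine (hp.mul_left (lam : ℝ)).congr fun n => ?_
      rw [hp_def, ← pois_succ lam n]
      push_cast
      ring
    exact (summable_nat_add_iff (f := fun n : ℕ => (n : ℝ) * p n) 1).mp h1
  -- various summabilities
  have sa : Summable fun n : ℕ => (n : ℝ) * p n * g (x n) := by
    refine sum_helper _ (fun n : ℕ => (n : ℝ) * p n * C1) (hnp.mul_right C1) fun n => ?_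
    rw [abs_mul, abs_of_nonneg (mul_nonneg (Nat.cast_nonneg n) (hp_nn n))]
    exact mul_le_mul_of_nonneg_left (hC1 _) (mul_nonneg (Nat.cast_nonneg n) (hp_nn n))
  have sbdd : ∀ (f : ℝ → ℝ) (C : ℝ), (∀ y, |f y| ≤ C) → ∀ (c : ℝ),
      Summable fun n => p n * f (x n + c) := by
    intro f C hC c
    refine sum_helper _ (fun n => p n * C) (hp.mul_right C) fun n => ?_
    rw [abs_mul, abs_of_nonneg (hp_nn n)]
    exact mul_le_mul_of_nonneg_left (hC _) (hp_nn n)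
  have hT0 : Summable fun n => p n * g (x n) := by simpa using sbdd g C1 hC1 0
  have hT1 : Summable fun n => p n * g (x n + 1/s) := sbdd g C1 hC1 (1/s)
  have sB : Summable fun n => p n * g2 (x n) := by simpa using sbdd g2 C2 hC2 0
  have hxb : ∀ n : ℕ, |x n| ≤ ((n : ℝ) + lam) / s := by
    intro n
    rw [hx_def, abs_div, abs_of_pos hs]
    gcongr
    calc |(n : ℝ) - lam| ≤ |(n : ℝ)| + |(lam : ℝ)| := abs_sub _ _
      _ = (n : ℝ) + lam := by
          rw [abs_of_nonneg (Nat.cast_nonneg n), abs_of_nonneg lam.coe_nonneg]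
  have sA : Summable fun n => p n * (x n * g (x n)) := by
    refine sum_helper _
      (fun n : ℕ => (C1/s) * ((n : ℝ) * p n) + ((C1 * lam)/s) * p n)
      ((hnp.mul_left _).add (hp.mul_left _)) fun n => ?_
    have : |p n * (x n * g (x n))| ≤ p n * ((((n : ℝ) + lam)/s) * C1) := by
      rw [abs_mul, abs_of_nonneg (hp_nn n), abs_mul]
      exact mul_le_mul_of_nonneg_left
        (mul_le_mul (hxb n) (hC1 _) (abs_nonneg _) (by positivity)) (hp_nn n)
    refine this.trans (le_of_eq ?_)
    field_simp
  -- the Stein shift identity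
  have hx_succ : ∀ n : ℕ, x (n + 1) = x n + 1/s := by
    intro n
    rw [hx_def]
    push_cast
    field_simp
    ring
  have shift : ∑' n : ℕ, (n : ℝ) * p n * g (x n) = (lam : ℝ) * ∑' n, p n * g (x n + 1/s) := by
    rw [Summable.tsum_eq_zero_add sa]
    have h0 : ((0 : ℕ) : ℝ) * p 0 * g (x 0) = 0 := by simp
    rw [h0, zero_add]
    have heq : ∀ n : ℕ, ((n + 1 : ℕ) : ℝ) * p (n + 1) * g (x (n + 1))
        = (lam : ℝ) * (p n * g (x n + 1/s)) := by
      intro n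
      rw [hx_succ n, hp_def]
      push_cast
      rw [← mul_assoc, pois_succ lam n]
    rw [tsum_congr heq, tsum_mul_left]
  have stein : ∑' n, p n * (x n * g (x n))
      = s * ∑' n, p n * (g (x n + 1/s) - g (x n)) := by
    have expand : ∀ n : ℕ, p n * (x n * g (x n))
        = (1/s) * ((n : ℝ) * p n * g (x n)) - s * (p n * g (x n)) := by
      intro n
      rw [hx_def]
      have : (lam : ℝ) = s * s := hs2.symm
      rw [this]
      field_simp
    calc ∑' n, p n * (x n * g (x n))
        = ∑' n : ℕ, ((1/s) * ((n : ℝ) * p n * g (x n)) - s * (p n * g (x n))) :=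
          tsum_congr expand
      _ = (1/s) * (∑' n : ℕ, (n : ℝ) * p n * g (x n)) - s * ∑' n, p n * g (x n) := by
          rw [Summable.tsum_sub (sa.mul_left _) (hT0.mul_left _), tsum_mul_left, tsum_mul_left]
      _ = (1/s) * ((lam : ℝ) * ∑' n, p n * g (x n + 1/s)) - s * ∑' n, p n * g (x n) := by
          rw [shift]
      _ = s * ∑' n, p n * (g (x n + 1/s) - g (x n)) := by
          rw [tsum_congr (fun n => mul_sub (p n) (g (x n + 1/s)) (g (x n))),
            Summable.tsum_sub hT1 hT0, ← hs2]
          field_simp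
  -- combine with the second-derivative term
  have key : ∑' n, p n * (x n * g (x n) - g2 (x n))
      = s * ∑' n, p n * (g (x n + 1/s) - g (x n) - (1/s) * g2 (x n)) := by
    calc ∑' n, p n * (x n * g (x n) - g2 (x n))
        = ∑' n, (p n * (x n * g (x n)) - p n * g2 (x n)) :=
          tsum_congr fun n => mul_sub _ _ _
      _ = ∑' n, p n * (x n * g (x n)) - ∑' n, p n * g2 (x n) := Summable.tsum_sub sA sB
      _ = s * ∑' n, p n * (g (x n + 1/s) - g (x n)) - ∑' n, p n * g2 (x n) := by rw [stein]
      _ = s * ∑' n, p n * (g (x n + 1/s) - g (x n) - (1/s) * g2 (x n)) := by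
          have e1 : ∀ n : ℕ, p n * (g (x n + 1/s) - g (x n) - (1/s) * g2 (x n))
              = p n * (g (x n + 1/s) - g (x n)) - (1/s) * (p n * g2 (x n)) := by
            intro n; ring
          rw [tsum_congr e1, Summable.tsum_sub (hT1.sub hT0 |>.congr ?_) (sB.mul_left _),
            tsum_mul_left]
          · rw [mul_sub, ← mul_assoc, mul_one_div, div_self hs0, one_mul]
          · intro n; ring
  -- Taylor expansion pointwise
  have tay : ∀ n : ℕ, g (x n + 1/s) - g (x n) - (1/s) * g2 (x n)
      = ∫ r in (0:ℝ)..1, (1 - r) * ((1/s) ^ 2 * g3 (x n + r * (1/s))) := by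
    intro n
    rw [hg_def, hg2_def, hg3_def]
    exact (taylor_aux hψ (x n) (1/s)).symm
  -- continuity and integrability of the remainder integrand
  have hc3 : Continuous g3 := hψ.continuous_iteratedDeriv 3 (by exact_mod_cast le_rfl)
  set F : ℕ → ℝ → ℝ := fun n r => p n * ((1 - r) * ((1/s) ^ 2 * g3 (x n + r * (1/s))))
    with hF_def
  have hcont : ∀ n, Continuous (F n) := by
    intro n
    exact continuous_const.mul ((continuous_const.sub continuous_id).mul
      (continuous_const.mul (hc3.comp (continuous_const.add
        (continuous_id.mul continuous_const)))))
  have hFint : ∀ n, Integrable (F n) (volume.restrict (Set.Ioc (0:ℝ) 1)) :=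
    fun n => ((hcont n).intervalIntegrable 0 1).1
  have hFnorm : Summable fun n => ∫ r in Set.Ioc (0:ℝ) 1, ‖F n r‖ := by
    refine sum_helper _ (fun n => p n * ((1/s) ^ 2 * C3)) (hp.mul_right _) fun n => ?_
    rw [abs_of_nonneg (integral_nonneg (fun r => norm_nonneg _))]
    calc (∫ r in Set.Ioc (0:ℝ) 1, ‖F n r‖)
        ≤ ∫ _r in Set.Ioc (0:ℝ) 1, p n * ((1/s) ^ 2 * C3) := by
          refine setIntegral_mono_on ((hFint n).norm) (integrable_const _)
            measurableSet_Ioc fun r hr => ?_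
          have h1r : |1 - r| ≤ 1 := by
            rw [abs_of_nonneg (by linarith [hr.2])]; linarith [hr.1]
          rw [Real.norm_eq_abs, hF_def]
          calc |p n * ((1 - r) * ((1/s) ^ 2 * g3 (x n + r * (1/s))))|
              = p n * (|1 - r| * ((1/s) ^ 2 * |g3 (x n + r * (1/s))|)) := by
                rw [abs_mul, abs_mul, abs_mul, abs_of_nonneg (hp_nn n),
                  abs_of_nonneg (by positivity : (0:ℝ) ≤ (1/s) ^ 2)]
            _ ≤ p n * (1 * ((1/s) ^ 2 * C3)) := by
                refine mul_le_mul_of_nonneg_left ?_ (hp_nn n)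
                exact mul_le_mul h1r (mul_le_mul_of_nonneg_left (hC3 _) (by positivity))
                  (by positivity) zero_le_one
            _ = p n * ((1/s) ^ 2 * C3) := by ring
      _ = p n * ((1/s) ^ 2 * C3) := by
          rw [setIntegral_const]
          simp [Real.volume_Ioc]
  have swap := MeasureTheory.integral_tsum_of_summable_integral_norm hFint hFnorm
  -- integrability of the various integrands wrt the Poisson measure
  have ibdd : ∀ (f : ℝ → ℝ) (C : ℝ), (∀ y, |f y| ≤ C) → ∀ (c : ℝ),
      Integrable (fun n => f (x n + c)) (poissonMeasure lam) := by
    intro f C hC c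
    refine integrable_poisson lam (sum_helper _ (fun n => p n * C) (hp.mul_right C) ?_)
    intro n
    rw [abs_of_nonneg (mul_nonneg (hp_nn n) (abs_nonneg _))]
    exact mul_le_mul_of_nonneg_left (hC _) (hp_nn n)
  have iLHS : Integrable (fun n => x n * g (x n) - g2 (x n)) (poissonMeasure lam) := by
    refine integrable_poisson lam (sum_helper _
      (fun n : ℕ => (C1/s) * ((n : ℝ) * p n) + ((C1 * lam)/s + C2) * p n)
      ((hnp.mul_left _).add (hp.mul_left _)) fun n => ?_)
    rw [abs_of_nonneg (mul_nonneg (hp_nn n) (abs_nonneg _))]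
    have hfb : |x n * g (x n) - g2 (x n)| ≤ (((n : ℝ) + lam)/s) * C1 + C2 := by
      refine (abs_sub _ _).trans (add_le_add ?_ (hC2 _))
      rw [abs_mul]
      exact mul_le_mul (hxb n) (hC1 _) (abs_nonneg _) (by positivity)
    refine (mul_le_mul_of_nonneg_left hfb (hp_nn n)).trans (le_of_eq ?_)
    field_simp
    ring
  have iG3 : ∀ c : ℝ, Integrable (fun n => g3 (x n + c)) (poissonMeasure lam) :=
    fun c => ibdd g3 C3 hC3 c
  -- now assemble everything
  have hIoc : ∀ f : ℝ → ℝ, (∫ r in (0:ℝ)..1, f r) = ∫ r in Set.Ioc (0:ℝ) 1, f r :=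
    fun f => intervalIntegral.integral_of_le zero_le_one
  calc ∫ n, (x n * g (x n) - g2 (x n)) ∂(poissonMeasure lam)
      = ∑' n, p n * (x n * g (x n) - g2 (x n)) := integral_poisson lam iLHS
    _ = s * ∑' n, p n * (g (x n + 1/s) - g (x n) - (1/s) * g2 (x n)) := key
    _ = s * ∑' n, ∫ r in Set.Ioc (0:ℝ) 1, F n r := by
        congr 1
        refine tsum_congr fun n => ?_
        rw [tay n, hIoc, hF_def, ← integral_const_mul]
    _ = s * ∫ r in Set.Ioc (0:ℝ) 1, ∑' n, F n r := by rw [swap]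
    _ = s * ∫ r in Set.Ioc (0:ℝ) 1,
          (1/s) ^ 2 * ((1 - r) * ∫ n, g3 (x n + r / s) ∂(poissonMeasure lam)) := by
        congr 1
        refine integral_congr_ae (Filter.Eventually.of_forall fun r => ?_)
        show ∑' n, F n r
          = (1/s) ^ 2 * ((1 - r) * ∫ n, g3 (x n + r / s) ∂(poissonMeasure lam))
        rw [integral_poisson lam (iG3 (r / s)), ← tsum_mul_left, ← tsum_mul_left]
        simp only [hF_def]
        refine tsum_congr fun n => ?_
        rw [mul_one_div r s, ← hp_def]
        ring
    _ = s⁻¹ * ∫ r in (0:ℝ)..1,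
          (1 - r) * ∫ n, g3 (x n + r / s) ∂(poissonMeasure lam) := by
        rw [integral_const_mul, hIoc]
        field_simp
end
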